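/- Fix $g \geq 1$ and let $E \subset (\mathbb{Z}/2\mathbb{Z})^g \times (\mathbb{Z}/2\mathbb{Z})^g$ be the set of even pairs ($b_1 \cdot b_2 = 0$). Suppose $(x_b)_{b \in E}$ are rational numbers such that for every even pair $a$, $\sum_{b \in E} (-1)^{\langle a, b\rangle} x_b = 0$, where $\langle (a_1,a_2),(b_1,b_2)\rangle = a_1\cdot b_2 + a_2\cdot b_1$. Then $x_b = 0$ for all $b \in E$. -/

import Mathlib

open Finset

def dot {g : ℕ} (a b : Fin g → ZMod 2) : ZMod 2 := ∑ i, a i * b i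

def sgn (x : ZMod 2) : ℚ := (-1 : ℚ) ^ x.val

def pair {g : ℕ} (v w : (Fin g → ZMod 2) × (Fin g → ZMod 2)) : ZMod 2 :=
  dot v.1 w.2 + dot v.2 w.1

def EvenPair (g : ℕ) : Type :=
  { p : (Fin g → ZMod 2) × (Fin g → ZMod 2) // dot p.1 p.2 = 0 }

instance (g : ℕ) : Fintype (EvenPair g) := by unfold EvenPair; infer_instance


lemma sgn_add (u v : ZMod 2) : sgn (u + v) = sgn u * sgn v := by
  fin_cases u <;> fin_cases v <;> norm_num [sgn, show (2:ZMod 2).val = 0 from rfl, show (1:ZMod 2).val = 1 from rfl, ZMod.val, Fin.isValue] <;> decide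

lemma sgn_sq (u : ZMod 2) : sgn u * sgn u = 1 := by
  fin_cases u <;> norm_num [sgn, show (2:ZMod 2).val = 0 from rfl, show (1:ZMod 2).val = 1 from rfl, ZMod.val]

lemma dot_add_left {g : ℕ} (a b c : Fin g → ZMod 2) : dot (a + b) c = dot a c + dot b c := by
  simp [dot, add_mul, Finset.sum_add_distrib]

lemma dot_comm {g : ℕ} (a b : Fin g → ZMod 2) : dot a b = dot b a := by
  simp [dot, mul_comm]

lemma char_sum {g : ℕ} (w : Fin g → ZMod 2) :
    ∑ a : Fin g → ZMod 2, sgn (dot a w) = if w = 0 then (2:ℚ)^g else 0 := by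
  split_ifs with h
  · subst h
    simp [dot, sgn, Finset.card_univ]
  · have hall : ∀ x : ZMod 2, x = 0 ∨ x = 1 := by decide
    obtain ⟨i, hi⟩ : ∃ i, w i ≠ 0 := by
      by_contra hc
      push_neg at hc
      exact h (funext hc)
    have hi1 : w i = 1 := (hall (w i)).resolve_left hi
    have key : ∀ a : Fin g → ZMod 2, sgn (dot (Pi.single i 1 + a) w) = - sgn (dot a w) := by
      intro a
      rw [dot_add_left, sgn_add]
      have h1 : dot (Pi.single i 1) w = 1 := by
        simp [dot, Pi.single_apply, hi1]
      rw [h1]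
      norm_num [sgn, ZMod.val_one]
    have := Equiv.sum_comp (Equiv.addLeft (Pi.single i 1 : Fin g → ZMod 2))
      (fun a => sgn (dot a w))
    simp only [Equiv.coe_addLeft, key] at this
    rw [Finset.sum_neg_distrib] at this
    linarith

abbrev Pr (g : ℕ) := (Fin g → ZMod 2) × (Fin g → ZMod 2)

lemma gauss {g : ℕ} : ∑ a : Pr g, sgn (dot a.1 a.2) = (2:ℚ)^g := by
  rw [Fintype.sum_prod_type]
  have h : ∀ a1 : Fin g → ZMod 2, ∑ a2 : Fin g → ZMod 2, sgn (dot a1 a2)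
      = if a1 = 0 then (2:ℚ)^g else 0 := by
    intro a1
    rw [← char_sum a1]
    exact Finset.sum_congr rfl fun a2 _ => by rw [dot_comm]
  simp [h]


lemma full_sum {g : ℕ} (v : Pr g) :
    ∑ a : Pr g, sgn (pair a v) = if v = 0 then (2:ℚ)^(2*g) else 0 := by
  rw [Fintype.sum_prod_type]
  simp only [pair, sgn_add]
  rw [← Finset.sum_mul_sum]
  rw [char_sum, char_sum]
  rcases eq_or_ne v 0 with hv | hv
  · subst hv
    simp [two_mul, pow_add]
  · rw [if_neg hv]
    have : v.1 ≠ 0 ∨ v.2 ≠ 0 := by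
      by_contra hc
      push_neg at hc
      exact hv (Prod.ext hc.1 hc.2)
    rcases this with h1 | h2
    · rw [if_neg h1]; simp
    · rw [if_neg h2]; simp

lemma dot_add_right {g : ℕ} (a b c : Fin g → ZMod 2) : dot a (b + c) = dot a b + dot a c := by
  simp [dot, mul_add, Finset.sum_add_distrib]

lemma twisted_sum {g : ℕ} (v : Pr g) :
    ∑ a : Pr g, sgn (pair a v) * sgn (dot a.1 a.2) = sgn (dot v.1 v.2) * (2:ℚ)^g := by
  have key : ∀ a : Pr g,
      sgn (pair (v + a) v) * sgn (dot (v + a).1 (v + a).2)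
        = sgn (dot v.1 v.2) * sgn (dot a.1 a.2) := by
    intro a
    have heq : pair (v + a) v + dot (v + a).1 (v + a).2 = dot v.1 v.2 + dot a.1 a.2 := by
      have h2 : dot v.2 v.1 = dot v.1 v.2 := dot_comm _ _
      have h3 : dot v.1 a.2 = dot a.2 v.1 := dot_comm _ _
      simp only [pair, Prod.fst_add, Prod.snd_add, dot_add_left, dot_add_right, h2, h3]
      generalize dot v.1 v.2 = X
      generalize dot a.1 v.2 = Y
      generalize dot a.2 v.1 = Z
      generalize dot a.1 a.2 = W
      revert X Y Z W
      decide
    rw [← sgn_add, heq, sgn_add]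
  have hshift := Equiv.sum_comp (Equiv.addLeft v)
    (fun a : Pr g => sgn (pair a v) * sgn (dot a.1 a.2))
  simp only [Equiv.coe_addLeft, key] at hshift
  rw [← hshift, ← Finset.mul_sum, gauss]


lemma sum_even {g : ℕ} (f : Pr g → ℚ) :
    ∑ a : EvenPair g, f a.1 = ∑ a : Pr g, (1 + sgn (dot a.1 a.2)) / 2 * f a := by
  have h1 : ∑ a ∈ Finset.univ.filter (fun p : Pr g => dot p.1 p.2 = 0), f a
      = ∑ a : EvenPair g, f a.1 :=
    Finset.sum_subtype _ (by simp) f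
  rw [← h1, Finset.sum_filter]
  refine Finset.sum_congr rfl fun a _ => ?_
  have hall : ∀ x : ZMod 2, x = 0 ∨ x = 1 := by decide
  rcases hall (dot a.1 a.2) with h | h <;> rw [h]
  · norm_num [sgn]
  · rw [if_neg one_ne_zero]
    norm_num [sgn, show (1:ZMod 2).val = 1 from rfl]

lemma pair_comm {g : ℕ} (v w : Pr g) : pair v w = pair w v := by
  unfold pair
  rw [dot_comm v.1, dot_comm v.2, add_comm]

lemma pair_add_right {g : ℕ} (a u v : Pr g) : pair a (u + v) = pair a u + pair a v := by
  simp only [pair, Prod.fst_add, Prod.snd_add, dot_add_right, dot_add_left]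
  ring

lemma add_self_pr {g : ℕ} (v : Pr g) : v + v = 0 := by
  ext <;> simp [CharTwo.add_self_eq_zero]

lemma add_eq_zero_iff_pr {g : ℕ} (u v : Pr g) : u + v = 0 ↔ u = v := by
  constructor
  · intro h
    have := congrArg (· + v) h
    simpa [add_assoc, add_self_pr] using this
  · rintro rfl
    exact add_self_pr u

instance (g : ℕ) : DecidableEq (EvenPair g) := by unfold EvenPair; infer_instance

theorem stmt_13 (g : ℕ) (hg : 1 ≤ g) (x : EvenPair g → ℚ)
    (hx : ∀ a : EvenPair g, ∑ b : EvenPair g, sgn (pair a.1 b.1) * x b = 0) :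
    ∀ b : EvenPair g, x b = 0 := by
  intro c
  have inner : ∀ b : EvenPair g, ∑ a : EvenPair g, sgn (pair a.1 (c.1 + b.1))
      = (if b = c then (2:ℚ)^(2*g) else 0) / 2 + sgn (pair c.1 b.1) * (2:ℚ)^g / 2 := by
    intro b
    rw [sum_even (fun a => sgn (pair a (c.1 + b.1)))]
    have expand : ∀ a : Pr g, (1 + sgn (dot a.1 a.2)) / 2 * sgn (pair a (c.1 + b.1))
        = sgn (pair a (c.1 + b.1)) / 2 + sgn (pair a (c.1 + b.1)) * sgn (dot a.1 a.2) / 2 := by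
      intro a; ring
    rw [Finset.sum_congr rfl fun a _ => expand a, Finset.sum_add_distrib,
      ← Finset.sum_div, ← Finset.sum_div, full_sum, twisted_sum]
    have hv0 : (c.1 + b.1 = 0) ↔ (b = c) := by
      rw [add_eq_zero_iff_pr]
      exact ⟨fun h => Subtype.ext h.symm, fun h => congrArg Subtype.val h.symm⟩
    have hQ : dot (c.1 + b.1).1 (c.1 + b.1).2 = pair c.1 b.1 := by
      simp only [Prod.fst_add, Prod.snd_add, dot_add_left, dot_add_right, pair, c.2, b.2]
      rw [dot_comm b.1.1 c.1.2]
      ring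
    rw [hQ, if_congr hv0 rfl rfl]
  have T : ∑ a : EvenPair g, sgn (pair c.1 a.1) * (∑ b : EvenPair g, sgn (pair a.1 b.1) * x b) = 0 := by
    simp [hx]
  have T2 : ∑ b : EvenPair g, (∑ a : EvenPair g, sgn (pair a.1 (c.1 + b.1))) * x b = 0 := by
    calc ∑ b : EvenPair g, (∑ a : EvenPair g, sgn (pair a.1 (c.1 + b.1))) * x b
        = ∑ b : EvenPair g, ∑ a : EvenPair g, sgn (pair c.1 a.1) * (sgn (pair a.1 b.1) * x b) := by
          refine Finset.sum_congr rfl fun b _ => ?_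
          rw [Finset.sum_mul]
          refine Finset.sum_congr rfl fun a _ => ?_
          rw [pair_add_right, sgn_add, _root_.pair_comm a.1 c.1]
          ring
      _ = ∑ a : EvenPair g, ∑ b : EvenPair g, sgn (pair c.1 a.1) * (sgn (pair a.1 b.1) * x b) :=
          Finset.sum_comm
      _ = ∑ a : EvenPair g, sgn (pair c.1 a.1) * ∑ b : EvenPair g, sgn (pair a.1 b.1) * x b := by
          refine Finset.sum_congr rfl fun a _ => ?_
          rw [Finset.mul_sum]
      _ = 0 := T
  have split : ∀ b : EvenPair g,
      ((if b = c then (2:ℚ)^(2*g) else 0) / 2 + sgn (pair c.1 b.1) * (2:ℚ)^g / 2) * x b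
      = (if b = c then (2:ℚ)^(2*g)/2 * x b else 0) + (2:ℚ)^g/2 * (sgn (pair c.1 b.1) * x b) := by
    intro b; split_ifs <;> ring
  rw [Finset.sum_congr rfl fun b _ => by rw [inner b, split b],
    Finset.sum_add_distrib, ← Finset.mul_sum, hx c, mul_zero, add_zero,
    Finset.sum_ite_eq' Finset.univ c] at T2
  simp only [Finset.mem_univ, if_true] at T2
  have hne : ((2:ℚ)^(2*g)/2) ≠ 0 := by positivity
  exact (mul_eq_zero.mp T2).resolve_left hne
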